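/- Let ψ be a unit vector and A, B self-adjoint operators with operator norms at most 1 such that ⟨ψ| A ⊗ B |ψ⟩ ≥ 1 − ε with ε ≥ 0. Then ‖(A ⊗ 1)ψ − (1 ⊗ B)ψ‖ ≤ √(2ε). -/
import Mathlib


open scoped InnerProductSpace

/-- If `A` (Alice side) and `B` (Bob side) are commuting self-adjoint operators of
norm at most `1` (modelling `A ⊗ 1` and `1 ⊗ B`), `ψ` is a unit vector and
`⟨ψ|A⊗B|ψ⟩ ≥ 1 − ε`, then `‖(A⊗1)ψ − (1⊗B)ψ‖ ≤ √(2ε)`. -/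
theorem stmt8 {H : Type*} [NormedAddCommGroup H] [InnerProductSpace ℂ H] [CompleteSpace H]
    (A B : H →L[ℂ] H)
    (hAsa : ContinuousLinearMap.adjoint A = A) (hAn : ‖A‖ ≤ 1)
    (hBsa : ContinuousLinearMap.adjoint B = B) (hBn : ‖B‖ ≤ 1)
    (hAB : Commute A B)
    (ψ : H) (hψ : ‖ψ‖ = 1) (ε : ℝ) (hε : 0 ≤ ε)
    (hcorr : (⟪ψ, (A * B) ψ⟫_ℂ).re ≥ 1 - ε) :
    ‖A ψ - B ψ‖ ≤ Real.sqrt (2 * ε) := by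
  have hA : ‖A ψ‖ ≤ 1 := by
    calc ‖A ψ‖ ≤ ‖A‖ * ‖ψ‖ := A.le_opNorm ψ
    _ ≤ 1 := by rw [hψ]; simpa using hAn
  have hB : ‖B ψ‖ ≤ 1 := by
    calc ‖B ψ‖ ≤ ‖B‖ * ‖ψ‖ := B.le_opNorm ψ
    _ ≤ 1 := by rw [hψ]; simpa using hBn
  have hinner : ⟪A ψ, B ψ⟫_ℂ = ⟪ψ, (A * B) ψ⟫_ℂ := by
    nth_rewrite 1 [← hAsa]
    rw [ContinuousLinearMap.adjoint_inner_left]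
    rfl
  have hsq : ‖A ψ - B ψ‖ ^ 2 ≤ 2 * ε := by
    have := @norm_sub_sq ℂ H _ _ _ (A ψ) (B ψ)
    rw [hinner] at this
    have hc : RCLike.re ⟪ψ, (A * B) ψ⟫_ℂ ≥ 1 - ε := hcorr
    nlinarith [sq_nonneg (‖A ψ‖ - 1), sq_nonneg (‖B ψ‖ - 1), norm_nonneg (A ψ),
      norm_nonneg (B ψ), hc]
  have := Real.sqrt_le_sqrt hsq
  rwa [Real.sqrt_sq (norm_nonneg _)] at this
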